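/- Let $h: X_A \to X_B$ be a homeomorphism giving a continuous orbit equivalence with data $(k_1,l_1)$ for $h$ and $(k_2,l_2)$ for $h^{-1}$. Then for all $x \in X_A$ and $p \in \mathbb{Z}_{\geq 0}$: $k_2^{l_1^p(x)}(h(x)) + l_2^{k_1^p(x)}(h(\sigma_A^p(x))) + p = k_2^{k_1^p(x)}(h(\sigma_A^p(x))) + l_2^{l_1^p(x)}(h(x))$. -/
import Mathlib


open Function Finset

/-- The one-sided topological Markov shift space of a `{0,1}`-matrix `A`. -/
abbrev MarkovShift {N : ℕ} (A : Matrix (Fin N) (Fin N) (Fin 2)) :=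
  {x : ℕ → Fin N // ∀ n : ℕ, A (x n) (x (n + 1)) = 1}

/-- The shift map `σ_A` on the one-sided Markov shift. -/
def mshift {N : ℕ} (A : Matrix (Fin N) (Fin N) (Fin 2)) :
    MarkovShift A → MarkovShift A :=
  fun x => ⟨fun n => x.1 (n + 1), fun n => x.2 (n + 1)⟩

/-- Ergodic sums `f^n(x) = ∑_{i<n} f(σ^i x)`. -/
def esum {X : Type*} (σ : X → X) (f : X → ℕ) (n : ℕ) (x : X) : ℕ :=
  ∑ i ∈ Finset.range n, f (σ^[i] x)

lemma esum_succ {X : Type*} (σ : X → X) (f : X → ℕ) (n : ℕ) (x : X) :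
    esum σ f (n+1) x = esum σ f n (σ x) + f x := by
  simp [esum, Finset.sum_range_succ', Function.iterate_succ_apply]

lemma iter_lemma {X Y : Type*} (σX : X → X) (σY : Y → Y) (g : X → Y) (k l : X → ℕ)
    (horb : ∀ x, σY^[k x] (g (σX x)) = σY^[l x] (g x)) :
    ∀ n x, σY^[esum σX k n x] (g (σX^[n] x)) = σY^[esum σX l n x] (g x) := by
  intro n
  induction n with
  | zero => intro x; simp [esum]
  | succ n ih =>
    intro x
    rw [esum_succ, esum_succ, Function.iterate_succ_apply, add_comm,
      Function.iterate_add_apply, ih (σX x), ← Function.iterate_add_apply, add_comm,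
      Function.iterate_add_apply, horb, ← Function.iterate_add_apply, add_comm]

lemma cont_comp_nat {X : Type*} [TopologicalSpace X] (g : X → ℕ) (hg : Continuous g)
    (F : ℕ → X → ℕ) (hF : ∀ n, Continuous (F n)) : Continuous (fun x => F (g x) x) := by
  rw [continuous_iff_continuousAt]
  intro x
  have hopen : IsOpen (g ⁻¹' {g x}) := hg.isOpen_preimage _ (isOpen_discrete _)
  refine ((hF (g x)).continuousAt).congr ?_
  refine Filter.eventuallyEq_of_mem (hopen.mem_nhds rfl) fun y hy => ?_
  simp only [Set.mem_preimage, Set.mem_singleton_iff] at hy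
  rw [hy]

lemma esum_cont {X : Type*} [TopologicalSpace X] (σ : X → X) (hσ : Continuous σ)
    (f : X → ℕ) (hf : Continuous f) (n : ℕ) : Continuous (esum σ f n) :=
  continuous_finset_sum _ fun i _ => hf.comp (hσ.iterate i)

lemma mshift_cont {N : ℕ} (A : Matrix (Fin N) (Fin N) (Fin 2)) :
    Continuous (mshift A) := by
  unfold mshift
  refine Continuous.subtype_mk ?_ _
  exact continuous_pi fun n =>
    (continuous_apply (n + 1)).comp (continuous_subtype_val : Continuous
      (Subtype.val : MarkovShift A → ℕ → Fin N))

/-- Lemma 3.3 of Matsumoto–Matui: the fundamental identity relating the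
ergodic sums of the cocycle data of a continuous orbit equivalence and its inverse. -/
theorem klp_identity {N M : ℕ}
    (A : Matrix (Fin N) (Fin N) (Fin 2)) (B : Matrix (Fin M) (Fin M) (Fin 2))
    (hdenseA : Dense {x : MarkovShift A |
      ¬ ∃ r s : ℕ, r ≠ s ∧ (mshift A)^[r] x = (mshift A)^[s] x})
    (hdenseB : Dense {y : MarkovShift B |
      ¬ ∃ r s : ℕ, r ≠ s ∧ (mshift B)^[r] y = (mshift B)^[s] y})
    (h : MarkovShift A ≃ₜ MarkovShift B)
    (k1 l1 : MarkovShift A → ℕ) (hk1 : Continuous k1) (hl1 : Continuous l1)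
    (k2 l2 : MarkovShift B → ℕ) (hk2 : Continuous k2) (hl2 : Continuous l2)
    (horb1 : ∀ x, (mshift B)^[k1 x] (h (mshift A x)) = (mshift B)^[l1 x] (h x))
    (horb2 : ∀ y, (mshift A)^[k2 y] (h.symm (mshift B y)) = (mshift A)^[l2 y] (h.symm y)) :
    ∀ (x : MarkovShift A) (p : ℕ),
      esum (mshift B) k2 (esum (mshift A) l1 p x) (h x) +
          esum (mshift B) l2 (esum (mshift A) k1 p x) (h ((mshift A)^[p] x)) + p
        = esum (mshift B) k2 (esum (mshift A) k1 p x) (h ((mshift A)^[p] x)) +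
            esum (mshift B) l2 (esum (mshift A) l1 p x) (h x) := by
  intro x p
  set σA := mshift A
  set σB := mshift B
  -- the two sides as functions of x
  set F : MarkovShift A → ℕ := fun x' =>
    esum σB k2 (esum σA l1 p x') (h x') +
      esum σB l2 (esum σA k1 p x') (h (σA^[p] x')) + p with hF
  set G : MarkovShift A → ℕ := fun x' =>
    esum σB k2 (esum σA k1 p x') (h (σA^[p] x')) +
      esum σB l2 (esum σA l1 p x') (h x') with hG
  suffices key : F = G from congrFun key x
  have hσA : Continuous σA := mshift_cont A
  have hσB : Continuous σB := mshift_cont B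
  have c1 : Continuous fun x' => esum σB k2 (esum σA l1 p x') (h x') :=
    cont_comp_nat _ (esum_cont σA hσA l1 hl1 p) _
      (fun n => (esum_cont σB hσB k2 hk2 n).comp h.continuous)
  have c2 : Continuous fun x' => esum σB l2 (esum σA k1 p x') (h (σA^[p] x')) :=
    cont_comp_nat _ (esum_cont σA hσA k1 hk1 p) _
      (fun n => (esum_cont σB hσB l2 hl2 n).comp (h.continuous.comp (hσA.iterate p)))
  have c3 : Continuous fun x' => esum σB k2 (esum σA k1 p x') (h (σA^[p] x')) :=
    cont_comp_nat _ (esum_cont σA hσA k1 hk1 p) _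
      (fun n => (esum_cont σB hσB k2 hk2 n).comp (h.continuous.comp (hσA.iterate p)))
  have c4 : Continuous fun x' => esum σB l2 (esum σA l1 p x') (h x') :=
    cont_comp_nat _ (esum_cont σA hσA l1 hl1 p) _
      (fun n => (esum_cont σB hσB l2 hl2 n).comp h.continuous)
  have hFc : Continuous F := ((c1.add c2).add continuous_const)
  have hGc : Continuous G := c3.add c4
  refine Continuous.ext_on hdenseA hFc hGc ?_
  intro x' hx'
  simp only [Set.mem_setOf_eq] at hx'
  -- abbreviations
  set K := esum σA k1 p x'
  set L := esum σA l1 p x'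
  set a := esum σB k2 K (h (σA^[p] x'))
  set b := esum σB l2 K (h (σA^[p] x'))
  set c := esum σB k2 L (h x')
  set d := esum σB l2 L (h x')
  have H1 : σB^[K] (h (σA^[p] x')) = σB^[L] (h x') :=
    iter_lemma σA σB h k1 l1 horb1 p x'
  set z := h.symm (σB^[L] (h x')) with hzdef
  have H2 : σA^[a] z = σA^[b + p] x' := by
    have := iter_lemma σB σA h.symm k2 l2 horb2 K (h (σA^[p] x'))
    rw [H1, h.symm_apply_apply] at this
    rw [hzdef, this, ← Function.iterate_add_apply]
  have H3 : σA^[c] z = σA^[d] x' := by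
    have := iter_lemma σB σA h.symm k2 l2 horb2 L (h x')
    rw [h.symm_apply_apply] at this
    rw [hzdef, this]
  have Hcomb : σA^[c + (b + p)] x' = σA^[a + d] x' := by
    calc σA^[c + (b + p)] x' = σA^[c] (σA^[b + p] x') := Function.iterate_add_apply _ _ _ _
    _ = σA^[c] (σA^[a] z) := by rw [H2]
    _ = σA^[a] (σA^[c] z) := by
        rw [← Function.iterate_add_apply, add_comm, Function.iterate_add_apply]
    _ = σA^[a] (σA^[d] x') := by rw [H3]
    _ = σA^[a + d] x' := (Function.iterate_add_apply _ _ _ _).symm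
  have heq : c + (b + p) = a + d := by
    by_contra hne
    exact hx' ⟨c + (b + p), a + d, hne, Hcomb⟩
  show c + b + p = a + d
  omega
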